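/- Define □(x,y,h) = e^{-(x+y+h)^2} - e^{-(x+h)^2} - e^{-(x+y)^2} + e^{-x^2}. For any α, β ∈ (0,1), the triple integral ∫_ℝ ∫_ℝ ∫_ℝ |□(x,y,h)|^2 |h|^{-1-2α} |y|^{-1-2β} dy dh dx is finite. -/

import Mathlib

open MeasureTheory Real Set
open scoped ENNReal

noncomputable section Stmt3Aux


private def D1g (t : ℝ) : ℝ := Real.exp (-t^2) * (-(2*t))
private def D2g (t : ℝ) : ℝ := Real.exp (-t^2) * (4*t^2 - 2)
private def kk (p : ℝ) (h : ℝ) : ℝ := (min 1 |h|)^2 * |h| ^ p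

private lemma hasDerivAt_Gg (t : ℝ) : HasDerivAt (fun t : ℝ => Real.exp (-t^2)) (D1g t) t := by
  have h1 : HasDerivAt (fun x : ℝ => -x^2) (-(2*t)) t := by
    simpa using (hasDerivAt_pow 2 t).fun_neg
  simpa [D1g] using h1.exp

private lemma hasDerivAt_D1g (t : ℝ) : HasDerivAt D1g (D2g t) t := by
  have h1 : HasDerivAt (fun x : ℝ => -x^2) (-(2*t)) t := by
    simpa using (hasDerivAt_pow 2 t).fun_neg
  have h2 : HasDerivAt (fun x : ℝ => -(2*x)) (-2) t := by
    simpa using ((hasDerivAt_id t).const_mul (2:ℝ)).fun_neg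
  have h3 : HasDerivAt D1g (Real.exp (-t^2) * (-(2*t)) * (-(2*t)) + Real.exp (-t^2) * (-2)) t :=
    HasDerivAt.mul h1.exp h2
  convert h3 using 1
  simp only [D2g]; ring

private lemma expHalf (t : ℝ) : Real.exp (-t^2) = Real.exp (-t^2/2) * Real.exp (-t^2/2) := by
  rw [← Real.exp_add]; ring_nf

private lemma abs_D1g_le (t : ℝ) : |D1g t| ≤ 2 * Real.exp (-t^2/2) := by
  have h1 : |t| ≤ Real.exp (t^2/2) := by
    nlinarith [Real.add_one_le_exp (t^2/2), sq_abs t, sq_nonneg (|t|-1), abs_nonneg t]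
  have h3 : Real.exp (-t^2/2) * |t| ≤ 1 := by
    calc Real.exp (-t^2/2) * |t| ≤ Real.exp (-t^2/2) * Real.exp (t^2/2) :=
          mul_le_mul_of_nonneg_left h1 (Real.exp_pos _).le
      _ = 1 := by rw [← Real.exp_add, show -t^2/2 + t^2/2 = 0 by ring, Real.exp_zero]
  have e1 : |D1g t| = Real.exp (-t^2) * (2 * |t|) := by
    rw [D1g, abs_mul, abs_of_pos (Real.exp_pos _), abs_neg, abs_mul, abs_two]
  rw [e1, expHalf]
  nlinarith [Real.exp_pos (-t^2/2), abs_nonneg t]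

private lemma abs_D2g_le (t : ℝ) : |D2g t| ≤ 10 * Real.exp (-t^2/2) := by
  have h4 : |4*t^2 - 2| ≤ 4*t^2 + 2 := by
    rcases abs_cases (4*t^2-2) with ⟨e,_⟩|⟨e,_⟩ <;> nlinarith [sq_nonneg t]
  have h6 : Real.exp (-t^2/2) * (4*t^2+2) ≤ 10 := by
    have h5 : (4*t^2+2 : ℝ) ≤ 10 * Real.exp (t^2/2) := by nlinarith [Real.add_one_le_exp (t^2/2)]
    calc Real.exp (-t^2/2) * (4*t^2+2) ≤ Real.exp (-t^2/2) * (10 * Real.exp (t^2/2)) :=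
          mul_le_mul_of_nonneg_left h5 (Real.exp_pos _).le
      _ = 10 * (Real.exp (-t^2/2) * Real.exp (t^2/2)) := by ring
      _ = 10 := by rw [← Real.exp_add, show -t^2/2 + t^2/2 = 0 by ring, Real.exp_zero, mul_one]
  have e1 : |D2g t| = Real.exp (-t^2) * |4*t^2 - 2| := by
    rw [D2g, abs_mul, abs_of_pos (Real.exp_pos _)]
  rw [e1, expHalf]
  nlinarith [Real.exp_pos (-t^2/2), Real.exp_pos (-t^2), abs_nonneg (4*t^2-2), sq_nonneg t]

private lemma exp_shift {a t : ℝ} (h : |t - a| ≤ 2) :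
    Real.exp (-t^2/2) ≤ Real.exp 4 * Real.exp (-a^2/4) := by
  rw [← Real.exp_add]
  apply Real.exp_le_exp.2
  have h1 := abs_le.1 h
  nlinarith [sq_nonneg (a/2 + (t - a))]

private lemma abs_sub_le_of_mem_uIcc {a b t : ℝ} (ht : t ∈ uIcc a b) : |t - a| ≤ |b - a| := by
  rcases mem_uIcc.1 ht with ⟨h1,h2⟩|⟨h1,h2⟩ <;> rcases abs_cases (b-a) with ⟨e,_⟩|⟨e,_⟩ <;>
    rw [abs_le] <;> constructor <;> linarith

private lemma abs_sub_le_of_deriv {g g' : ℝ → ℝ} (hg : ∀ t, HasDerivAt g (g' t) t)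
    {a b C : ℝ} (hbd : ∀ t ∈ uIcc a b, |g' t| ≤ C) :
    |g b - g a| ≤ C * |b - a| := by
  have := Convex.norm_image_sub_le_of_norm_hasDerivWithin_le
    (f := g) (f' := g') (fun t ht => (hg t).hasDerivWithinAt)
    (fun t ht => by simpa [Real.norm_eq_abs] using hbd t ht)
    (convex_uIcc a b) left_mem_uIcc right_mem_uIcc
  simpa [Real.norm_eq_abs] using this

private lemma incr_Gg {a u : ℝ} (hu : |u| ≤ 2) :
    |Real.exp (-(a+u)^2) - Real.exp (-a^2)| ≤ 2 * Real.exp 4 * Real.exp (-a^2/4) * |u| := by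
  have h := abs_sub_le_of_deriv (g := fun t : ℝ => Real.exp (-t^2)) (g' := D1g) hasDerivAt_Gg
    (a := a) (b := a+u) (C := 2 * Real.exp 4 * Real.exp (-a^2/4)) ?_
  · simpa using h
  · intro t ht
    have h1 : |t - a| ≤ 2 := by
      have := abs_sub_le_of_mem_uIcc ht
      simp only [add_sub_cancel_left] at this
      exact this.trans hu
    calc |D1g t| ≤ 2 * Real.exp (-t^2/2) := abs_D1g_le t
      _ ≤ 2 * (Real.exp 4 * Real.exp (-a^2/4)) := by have := exp_shift h1; linarith
      _ = 2 * Real.exp 4 * Real.exp (-a^2/4) := by ring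

private lemma incr_D1g {x t u : ℝ} (ht : |t - x| ≤ 1) (hu : |u| ≤ 1) :
    |D1g (t+u) - D1g t| ≤ 10 * Real.exp 4 * Real.exp (-x^2/4) * |u| := by
  have h := abs_sub_le_of_deriv (g := D1g) (g' := D2g) hasDerivAt_D1g
    (a := t) (b := t+u) (C := 10 * Real.exp 4 * Real.exp (-x^2/4)) ?_
  · simpa using h
  · intro s hs
    have h1 : |s - x| ≤ 2 := by
      have h2 := abs_sub_le_of_mem_uIcc hs
      simp only [add_sub_cancel_left] at h2
      have h3 : |s - t| ≤ 1 := h2.trans hu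
      calc |s - x| = |(s - t) + (t - x)| := by ring_nf
        _ ≤ |s - t| + |t - x| := abs_add_le _ _
        _ ≤ 2 := by linarith
    calc |D2g s| ≤ 10 * Real.exp (-s^2/2) := abs_D2g_le s
      _ ≤ 10 * (Real.exp 4 * Real.exp (-x^2/4)) := by have := exp_shift h1; linarith
      _ = 10 * Real.exp 4 * Real.exp (-x^2/4) := by ring

private lemma key (x y h : ℝ) :
    |Real.exp (-(x+y+h)^2) - Real.exp (-(x+h)^2) - Real.exp (-(x+y)^2) + Real.exp (-x^2)| ≤
      10 * Real.exp 4 * min 1 |h| * min 1 |y| *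
        (Real.exp (-x^2/4) + Real.exp (-(x+y)^2/4) + Real.exp (-(x+h)^2/4)
          + Real.exp (-(x+y+h)^2/4)) := by
  have he4 : (1:ℝ) ≤ Real.exp 4 := Real.one_le_exp (by norm_num)
  have he4' : (0:ℝ) < Real.exp 4 := Real.exp_pos _
  by_cases hy : |y| ≤ 1 <;> by_cases hh : |h| ≤ 1
  · -- both small
    rw [min_eq_right hh, min_eq_right hy]
    have hgd : ∀ t : ℝ, HasDerivAt (fun t : ℝ => Real.exp (-(t+h)^2) - Real.exp (-t^2))
        (D1g (t+h) - D1g t) t := by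
      intro t
      have h1 : HasDerivAt (fun t : ℝ => Real.exp (-(t+h)^2)) (D1g (t+h)) t := by
        have := (hasDerivAt_Gg (t+h)).comp t ((hasDerivAt_id t).add_const h)
        simpa [Function.comp_def] using this
      exact h1.sub (hasDerivAt_Gg t)
    have hbd : ∀ t ∈ uIcc x (x+y), |D1g (t+h) - D1g t| ≤
        10 * Real.exp 4 * Real.exp (-x^2/4) * |h| := by
      intro t ht
      have h1 : |t - x| ≤ 1 := by
        have := abs_sub_le_of_mem_uIcc ht
        simp only [add_sub_cancel_left] at this
        exact this.trans hy
      exact incr_D1g h1 hh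
    have mvt := abs_sub_le_of_deriv hgd hbd
    simp only [add_sub_cancel_left] at mvt
    have e : Real.exp (-(x+y+h)^2) - Real.exp (-(x+h)^2) - Real.exp (-(x+y)^2) + Real.exp (-x^2)
        = (Real.exp (-(x+y+h)^2) - Real.exp (-(x+y)^2))
          - (Real.exp (-(x+h)^2) - Real.exp (-x^2)) := by ring
    rw [e]
    refine le_trans mvt ?_
    nlinarith [Real.exp_pos (-(x+y)^2/4), Real.exp_pos (-(x+h)^2/4), Real.exp_pos (-(x+y+h)^2/4),
      Real.exp_pos (-x^2/4), abs_nonneg h, abs_nonneg y,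
      mul_nonneg (mul_nonneg (abs_nonneg h) (abs_nonneg y)) he4'.le]
  · -- |y| ≤ 1 < |h| : increments of size y
    rw [min_eq_left (le_of_not_ge hh), min_eq_right hy]
    have i1 := incr_Gg (a := x+h) (u := y) (hy.trans (by norm_num))
    have i2 := incr_Gg (a := x) (u := y) (hy.trans (by norm_num))
    have e1 : x + h + y = x + y + h := by ring
    rw [e1] at i1
    have e : Real.exp (-(x+y+h)^2) - Real.exp (-(x+h)^2) - Real.exp (-(x+y)^2) + Real.exp (-x^2)
        = (Real.exp (-(x+y+h)^2) - Real.exp (-(x+h)^2))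
          - (Real.exp (-(x+y)^2) - Real.exp (-x^2)) := by ring
    rw [e]
    have tri := abs_sub (Real.exp (-(x+y+h)^2) - Real.exp (-(x+h)^2))
      (Real.exp (-(x+y)^2) - Real.exp (-x^2))
    nlinarith [Real.exp_pos (-x^2/4), Real.exp_pos (-(x+y)^2/4), Real.exp_pos (-(x+h)^2/4),
      Real.exp_pos (-(x+y+h)^2/4), abs_nonneg y,
      mul_nonneg (mul_nonneg he4'.le (abs_nonneg y)) (Real.exp_pos (-(x+y)^2/4)).le,
      mul_nonneg (mul_nonneg he4'.le (abs_nonneg y)) (Real.exp_pos (-(x+y+h)^2/4)).le]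
  · -- |h| ≤ 1 < |y| : increments of size h
    rw [min_eq_right hh, min_eq_left (le_of_not_ge hy)]
    have i1 := incr_Gg (a := x+y) (u := h) (hh.trans (by norm_num))
    have i2 := incr_Gg (a := x) (u := h) (hh.trans (by norm_num))
    have e : Real.exp (-(x+y+h)^2) - Real.exp (-(x+h)^2) - Real.exp (-(x+y)^2) + Real.exp (-x^2)
        = (Real.exp (-(x+y+h)^2) - Real.exp (-(x+y)^2))
          - (Real.exp (-(x+h)^2) - Real.exp (-x^2)) := by ring
    rw [e]
    have tri := abs_sub (Real.exp (-(x+y+h)^2) - Real.exp (-(x+y)^2))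
      (Real.exp (-(x+h)^2) - Real.exp (-x^2))
    nlinarith [Real.exp_pos (-x^2/4), Real.exp_pos (-(x+y)^2/4), Real.exp_pos (-(x+h)^2/4),
      Real.exp_pos (-(x+y+h)^2/4), abs_nonneg h,
      mul_nonneg (mul_nonneg he4'.le (abs_nonneg h)) (Real.exp_pos (-(x+h)^2/4)).le,
      mul_nonneg (mul_nonneg he4'.le (abs_nonneg h)) (Real.exp_pos (-(x+y+h)^2/4)).le]
  · -- both large
    rw [min_eq_left (le_of_not_ge hh), min_eq_left (le_of_not_ge hy)]
    have b1 : Real.exp (-(x+y+h)^2) ≤ Real.exp (-(x+y+h)^2/4) := by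
      apply Real.exp_le_exp.2; nlinarith [sq_nonneg (x+y+h)]
    have b2 : Real.exp (-(x+h)^2) ≤ Real.exp (-(x+h)^2/4) := by
      apply Real.exp_le_exp.2; nlinarith [sq_nonneg (x+h)]
    have b3 : Real.exp (-(x+y)^2) ≤ Real.exp (-(x+y)^2/4) := by
      apply Real.exp_le_exp.2; nlinarith [sq_nonneg (x+y)]
    have b4 : Real.exp (-x^2) ≤ Real.exp (-x^2/4) := by
      apply Real.exp_le_exp.2; nlinarith [sq_nonneg x]
    have p1 := Real.exp_pos (-(x+y+h)^2)
    have p2 := Real.exp_pos (-(x+h)^2)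
    have p3 := Real.exp_pos (-(x+y)^2)
    have p4 := Real.exp_pos (-x^2)
    have q1 := Real.exp_pos (-(x+y+h)^2/4)
    have q2 := Real.exp_pos (-(x+h)^2/4)
    have q3 := Real.exp_pos (-(x+y)^2/4)
    have q4 := Real.exp_pos (-x^2/4)
    rw [abs_le]
    constructor <;> nlinarith

private lemma key_sq (pa pb : ℝ) (x y h : ℝ) :
    |Real.exp (-(x+y+h)^2) - Real.exp (-(x+h)^2) - Real.exp (-(x+y)^2) + Real.exp (-x^2)| ^ 2
        * |h| ^ pa * |y| ^ pb ≤
      400 * Real.exp 8 * kk pa h * kk pb y *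
        (Real.exp (-x^2/2) + Real.exp (-(x+y)^2/2) + Real.exp (-(x+h)^2/2)
          + Real.exp (-(x+y+h)^2/2)) := by
  have hk := key x y h
  have hP : (0:ℝ) ≤ |h| ^ pa := Real.rpow_nonneg (abs_nonneg h) _
  have hQ : (0:ℝ) ≤ |y| ^ pb := Real.rpow_nonneg (abs_nonneg y) _
  have hmh : (0:ℝ) ≤ min 1 |h| := le_min zero_le_one (abs_nonneg h)
  have hmy : (0:ℝ) ≤ min 1 |y| := le_min zero_le_one (abs_nonneg y)
  have hS : (0:ℝ) ≤ Real.exp (-x^2/4) + Real.exp (-(x+y)^2/4) + Real.exp (-(x+h)^2/4)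
      + Real.exp (-(x+y+h)^2/4) := by positivity
  have h1 : |Real.exp (-(x+y+h)^2) - Real.exp (-(x+h)^2) - Real.exp (-(x+y)^2) + Real.exp (-x^2)| ^ 2
      ≤ (10 * Real.exp 4 * min 1 |h| * min 1 |y| *
        (Real.exp (-x^2/4) + Real.exp (-(x+y)^2/4) + Real.exp (-(x+h)^2/4)
          + Real.exp (-(x+y+h)^2/4))) ^ 2 :=
    pow_le_pow_left₀ (abs_nonneg _) hk 2
  have esq : ∀ v : ℝ, (Real.exp (-v^2/4)) ^ 2 = Real.exp (-v^2/2) := by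
    intro v; rw [sq, ← Real.exp_add]; congr 1; ring
  have e8 : Real.exp 4 ^ 2 = Real.exp 8 := by rw [sq, ← Real.exp_add]; norm_num
  have h2 : (Real.exp (-x^2/4) + Real.exp (-(x+y)^2/4) + Real.exp (-(x+h)^2/4)
      + Real.exp (-(x+y+h)^2/4)) ^ 2 ≤
      4 * (Real.exp (-x^2/2) + Real.exp (-(x+y)^2/2) + Real.exp (-(x+h)^2/2)
        + Real.exp (-(x+y+h)^2/2)) := by
    have e1 := esq x
    have e2 := esq (x+y)
    have e3 := esq (x+h)
    have e4 := esq (x+y+h)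
    nlinarith [sq_nonneg (Real.exp (-x^2/4) - Real.exp (-(x+y)^2/4)),
      sq_nonneg (Real.exp (-x^2/4) - Real.exp (-(x+h)^2/4)),
      sq_nonneg (Real.exp (-x^2/4) - Real.exp (-(x+y+h)^2/4)),
      sq_nonneg (Real.exp (-(x+y)^2/4) - Real.exp (-(x+h)^2/4)),
      sq_nonneg (Real.exp (-(x+y)^2/4) - Real.exp (-(x+y+h)^2/4)),
      sq_nonneg (Real.exp (-(x+h)^2/4) - Real.exp (-(x+y+h)^2/4))]
  calc |Real.exp (-(x+y+h)^2) - Real.exp (-(x+h)^2) - Real.exp (-(x+y)^2) + Real.exp (-x^2)| ^ 2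
        * |h| ^ pa * |y| ^ pb
      ≤ (10 * Real.exp 4 * min 1 |h| * min 1 |y| *
          (Real.exp (-x^2/4) + Real.exp (-(x+y)^2/4) + Real.exp (-(x+h)^2/4)
            + Real.exp (-(x+y+h)^2/4))) ^ 2 * |h| ^ pa * |y| ^ pb := by
        exact mul_le_mul_of_nonneg_right (mul_le_mul_of_nonneg_right h1 hP) hQ
    _ = (100 * Real.exp 8 * ((min 1 |h|)^2 * |h| ^ pa) * ((min 1 |y|)^2 * |y| ^ pb)) *
          (Real.exp (-x^2/4) + Real.exp (-(x+y)^2/4) + Real.exp (-(x+h)^2/4)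
            + Real.exp (-(x+y+h)^2/4)) ^ 2 := by
        rw [← e8]; ring
    _ ≤ (100 * Real.exp 8 * ((min 1 |h|)^2 * |h| ^ pa) * ((min 1 |y|)^2 * |y| ^ pb)) *
          (4 * (Real.exp (-x^2/2) + Real.exp (-(x+y)^2/2) + Real.exp (-(x+h)^2/2)
            + Real.exp (-(x+y+h)^2/2))) := by
        refine mul_le_mul_of_nonneg_left h2 ?_
        positivity
    _ = 400 * Real.exp 8 * kk pa h * kk pb y *
          (Real.exp (-x^2/2) + Real.exp (-(x+y)^2/2) + Real.exp (-(x+h)^2/2)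
            + Real.exp (-(x+y+h)^2/2)) := by
        simp only [kk]; ring




lemma kk_nonneg (p h : ℝ) : 0 ≤ kk p h := by
  unfold kk; positivity

lemma kk_measurable (p : ℝ) : Measurable (kk p) := by
  unfold kk; fun_prop

lemma integrable_kk {p : ℝ} (h1 : p < -1) (h2 : -3 < p) : Integrable (kk p) := by
  have hIoi : IntegrableOn (kk p) (Ioi 0) := by
    have hIoc : IntegrableOn (kk p) (Ioc 0 1) := by
      have hbase : IntegrableOn (fun x : ℝ => x ^ (2 + p)) (Ioc 0 1) := by
        have := intervalIntegral.intervalIntegrable_rpow' (a := 0) (b := 1) (r := 2+p)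
          (by linarith)
        rwa [intervalIntegrable_iff_integrableOn_Ioc_of_le (by norm_num)] at this
      refine hbase.congr_fun (fun x hx => ?_) measurableSet_Ioc
      have hx0 : (0:ℝ) < x := hx.1
      have hx1 : x ≤ 1 := hx.2
      rw [kk, abs_of_pos hx0, min_eq_right hx1]
      beta_reduce
      rw [Real.rpow_add hx0]
      rw [show (2:ℝ) = ((2:ℕ):ℝ) by norm_num, Real.rpow_natCast]
    have hIoi1 : IntegrableOn (kk p) (Ioi 1) := by
      refine (integrableOn_Ioi_rpow_of_lt h1 one_pos).congr_fun (fun x hx => ?_) measurableSet_Ioi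
      have hx1 : (1:ℝ) ≤ x := le_of_lt hx
      rw [kk, abs_of_pos (lt_of_lt_of_le one_pos hx1), min_eq_left hx1, one_pow, one_mul]
    have := hIoc.union hIoi1
    rwa [Ioc_union_Ioi_eq_Ioi zero_le_one] at this
  have hIio : IntegrableOn (kk p) (Iio 0) := by
    have hmp := (MeasurePreserving.integrableOn_comp_preimage
      (Measure.measurePreserving_neg (volume : Measure ℝ))
      (Homeomorph.neg ℝ).measurableEmbedding).2 hIoi
    have e2 : (kk p ∘ Neg.neg) = kk p := by
      funext x; simp [kk, abs_neg, Function.comp]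
    have e1 : (Neg.neg ⁻¹' Ioi (0:ℝ)) = Iio 0 := by
      ext z; simp
    rw [e2, e1] at hmp
    exact hmp
  have hIci : IntegrableOn (kk p) (Ici 0) := (integrableOn_Ici_iff_integrableOn_Ioi (by simp)).2 hIoi
  have hu : IntegrableOn (kk p) (Iio 0 ∪ Ici 0) := hIio.union hIci
  rwa [Iio_union_Ici, integrableOn_univ] at hu

lemma lintegral_kk_lt_top {p : ℝ} (h1 : p < -1) (h2 : -3 < p) :
    ∫⁻ h : ℝ, ENNReal.ofReal (kk p h) < ⊤ :=
  (integrable_kk h1 h2).lintegral_lt_top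

lemma gauss_lintegral_lt_top : ∫⁻ x : ℝ, ENNReal.ofReal (Real.exp (-x^2/2)) < ⊤ := by
  have h : Integrable (fun x : ℝ => Real.exp (-(1/2) * x^2)) :=
    integrable_exp_neg_mul_sq (by norm_num)
  have e : (fun x : ℝ => Real.exp (-x^2/2)) = fun x : ℝ => Real.exp (-(1/2) * x^2) := by
    funext x; ring_nf
  have := h.lintegral_lt_top
  convert this using 3 with x
  ring_nf

lemma gauss_shift (w : ℝ) :
    ∫⁻ x : ℝ, ENNReal.ofReal (Real.exp (-(x+w)^2/2)) =
      ∫⁻ x : ℝ, ENNReal.ofReal (Real.exp (-x^2/2)) :=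
  lintegral_add_right_eq_self (fun x => ENNReal.ofReal (Real.exp (-x^2/2))) w


end Stmt3Aux

/-- With `□(x,y,h) = e^{-(x+y+h)²} - e^{-(x+h)²} - e^{-(x+y)²} + e^{-x²}` and
`α, β ∈ (0,1)`, the triple integral
`∫∫∫ |□(x,y,h)|² |h|^{-1-2α} |y|^{-1-2β} dy dh dx` is finite. -/
theorem stmt3 (α β : ℝ) (hα : α ∈ Set.Ioo (0 : ℝ) 1) (hβ : β ∈ Set.Ioo (0 : ℝ) 1) :
    (∫⁻ x : ℝ, ∫⁻ h : ℝ, ∫⁻ y : ℝ, ENNReal.ofReal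
        (|Real.exp (-(x + y + h) ^ 2) - Real.exp (-(x + h) ^ 2)
            - Real.exp (-(x + y) ^ 2) + Real.exp (-x ^ 2)| ^ 2
          * |h| ^ (-1 - 2 * α) * |y| ^ (-1 - 2 * β))) < ⊤ := by
  obtain ⟨hα0, hα1⟩ := hα
  obtain ⟨hβ0, hβ1⟩ := hβ
  set pa : ℝ := -1 - 2 * α with hpa
  set pb : ℝ := -1 - 2 * β with hpb
  set F : ℝ → ℝ → ℝ → ℝ≥0∞ := fun x h y => ENNReal.ofReal
    (400 * Real.exp 8 * kk pa h * kk pb y * (Real.exp (-x^2/2) + Real.exp (-(x+y)^2/2)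
      + Real.exp (-(x+h)^2/2) + Real.exp (-(x+y+h)^2/2))) with hF
  have step1 : (∫⁻ x : ℝ, ∫⁻ h : ℝ, ∫⁻ y : ℝ, ENNReal.ofReal
        (|Real.exp (-(x + y + h) ^ 2) - Real.exp (-(x + h) ^ 2)
            - Real.exp (-(x + y) ^ 2) + Real.exp (-x ^ 2)| ^ 2
          * |h| ^ pa * |y| ^ pb))
      ≤ ∫⁻ x : ℝ, ∫⁻ h : ℝ, ∫⁻ y : ℝ, F x h y := by
    refine lintegral_mono fun x => lintegral_mono fun h => lintegral_mono fun y => ?_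
    exact ENNReal.ofReal_le_ofReal (key_sq pa pb x y h)
  refine lt_of_le_of_lt step1 ?_
  have hFm3 : Measurable (fun q : (ℝ × ℝ) × ℝ => F q.1.1 q.1.2 q.2) := by
    simp only [hF, kk]
    apply Measurable.ennreal_ofReal
    fun_prop
  have hFm2 : ∀ h : ℝ, Measurable (fun q : ℝ × ℝ => F q.1 h q.2) := by
    intro h
    simp only [hF, kk]
    apply Measurable.ennreal_ofReal
    fun_prop
  have sw1 : (∫⁻ x : ℝ, ∫⁻ h : ℝ, ∫⁻ y : ℝ, F x h y)
      = ∫⁻ h : ℝ, ∫⁻ x : ℝ, ∫⁻ y : ℝ, F x h y := by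
    apply lintegral_lintegral_swap
    exact (Measurable.lintegral_prod_right
      (f := fun (p : ℝ × ℝ) y => F p.1 p.2 y) hFm3).aemeasurable
  have sw2 : ∀ h : ℝ, (∫⁻ x : ℝ, ∫⁻ y : ℝ, F x h y) = ∫⁻ y : ℝ, ∫⁻ x : ℝ, F x h y := by
    intro h
    exact lintegral_lintegral_swap (hFm2 h).aemeasurable
  set Γ : ℝ≥0∞ := ∫⁻ x : ℝ, ENNReal.ofReal (Real.exp (-x^2/2)) with hΓ
  have hΓtop : Γ ≠ ⊤ := gauss_lintegral_lt_top.ne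
  have inner : ∀ h y : ℝ, (∫⁻ x : ℝ, F x h y)
      = ENNReal.ofReal (400 * Real.exp 8 * kk pa h * kk pb y) * (4 * Γ) := by
    intro h y
    have hkka := kk_nonneg pa h
    have hkkb := kk_nonneg pb y
    have hnn : 0 ≤ 400 * Real.exp 8 * kk pa h * kk pb y := by positivity
    have e1 : ∀ x : ℝ, F x h y = ENNReal.ofReal (400 * Real.exp 8 * kk pa h * kk pb y) *
        (ENNReal.ofReal (Real.exp (-x^2/2)) + ENNReal.ofReal (Real.exp (-(x+y)^2/2))
          + ENNReal.ofReal (Real.exp (-(x+h)^2/2))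
          + ENNReal.ofReal (Real.exp (-(x+y+h)^2/2))) := by
      intro x
      simp only [hF]
      rw [ENNReal.ofReal_mul hnn, ENNReal.ofReal_add (by positivity) (by positivity),
        ENNReal.ofReal_add (by positivity) (by positivity),
        ENNReal.ofReal_add (by positivity) (by positivity)]
    rw [lintegral_congr e1, lintegral_const_mul' _ _ ENNReal.ofReal_ne_top]
    congr 1
    have m1 : Measurable fun x : ℝ => ENNReal.ofReal (Real.exp (-x^2/2)) := by fun_prop
    have m2 : Measurable fun x : ℝ => ENNReal.ofReal (Real.exp (-(x+y)^2/2)) := by fun_prop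
    have m3 : Measurable fun x : ℝ => ENNReal.ofReal (Real.exp (-(x+h)^2/2)) := by fun_prop
    rw [lintegral_add_left ((m1.fun_add m2).fun_add m3), lintegral_add_left (m1.fun_add m2),
      lintegral_add_left m1]
    have e4 : (∫⁻ x : ℝ, ENNReal.ofReal (Real.exp (-(x+y+h)^2/2))) = Γ := by
      have hgs := gauss_shift (y+h)
      rw [hΓ]
      rw [← hgs]
      apply lintegral_congr
      intro x
      rw [show x + (y + h) = x + y + h by ring]
    rw [gauss_shift y, gauss_shift h, e4, ← hΓ]
    ring
  rw [sw1, lintegral_congr sw2, lintegral_congr (fun h => lintegral_congr (fun y => inner h y))]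
  set A : ℝ≥0∞ := 4 * Γ with hA
  have hAne : A ≠ ⊤ := by
    rw [hA]
    exact ENNReal.mul_ne_top (by norm_num) hΓtop
  set Iβ : ℝ≥0∞ := ∫⁻ y : ℝ, ENNReal.ofReal (kk pb y) with hIβ
  have hIβtop : Iβ ≠ ⊤ := (lintegral_kk_lt_top (by rw [hpb]; linarith) (by rw [hpb]; linarith)).ne
  have e6 : ∀ h : ℝ, (∫⁻ y : ℝ, ENNReal.ofReal (400 * Real.exp 8 * kk pa h * kk pb y) * A)
      = (ENNReal.ofReal (400 * Real.exp 8 * kk pa h) * A) * Iβ := by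
    intro h
    have hnn2 : 0 ≤ 400 * Real.exp 8 * kk pa h := by
      have := kk_nonneg pa h; positivity
    have e5 : ∀ y : ℝ, ENNReal.ofReal (400 * Real.exp 8 * kk pa h * kk pb y) * A
        = (ENNReal.ofReal (400 * Real.exp 8 * kk pa h) * A) * ENNReal.ofReal (kk pb y) := by
      intro y
      rw [ENNReal.ofReal_mul hnn2]
      ring
    rw [lintegral_congr e5,
      lintegral_const_mul' _ _ (ENNReal.mul_ne_top ENNReal.ofReal_ne_top hAne)]
  rw [lintegral_congr e6]
  have e7 : ∀ h : ℝ, ENNReal.ofReal (400 * Real.exp 8 * kk pa h) * A * Iβ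
      = ENNReal.ofReal (kk pa h) * (ENNReal.ofReal (400 * Real.exp 8) * A * Iβ) := by
    intro h
    rw [ENNReal.ofReal_mul (by positivity)]
    ring
  rw [lintegral_congr e7,
    lintegral_mul_const' _ _ (ENNReal.mul_ne_top
      (ENNReal.mul_ne_top ENNReal.ofReal_ne_top hAne) hIβtop)]
  have hIαtop : (∫⁻ h : ℝ, ENNReal.ofReal (kk pa h)) ≠ ⊤ :=
    (lintegral_kk_lt_top (by rw [hpa]; linarith) (by rw [hpa]; linarith)).ne
  exact ENNReal.mul_lt_top hIαtop.lt_top (ENNReal.mul_ne_top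
    (ENNReal.mul_ne_top ENNReal.ofReal_ne_top hAne) hIβtop).lt_top
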